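/- arXiv:2109.13794 — 5 statements merged into one kernel-verified Lean document; each statement's English description precedes it below -/
import Mathlib

section
/- For every modulus κ with 0 < κ < 1, the complete integral K = ∫₀^{π/2} F(1/4, 3/4; 1/2; κ² sin² t) dt satisfies K = (π/2) · F(1/4, 3/4; 1; κ²). -/
open Real Finset MeasureTheory

lemma evalAsc (x : ℝ) (n : ℕ) :
    Polynomial.eval x (ascPochhammer ℝ n) = ∏ i ∈ Finset.range n, (x + i) := by
  induction n with
  | zero => simp
  | succ k ih => rw [ascPochhammer_succ_eval, ih, Finset.prod_range_succ]

lemma ascPos (x : ℝ) (hx : 0 < x) (n : ℕ) : 0 < Polynomial.eval x (ascPochhammer ℝ n) := by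
  rw [evalAsc]; exact Finset.prod_pos fun i _ => by positivity

lemma ascMono (x y : ℝ) (hx : 0 < x) (hxy : x ≤ y) (n : ℕ) :
    Polynomial.eval x (ascPochhammer ℝ n) ≤ Polynomial.eval y (ascPochhammer ℝ n) := by
  rw [evalAsc, evalAsc]
  refine Finset.prod_le_prod (fun i _ => by positivity) (fun i _ => by linarith)

noncomputable def cc (a b c : ℝ) (n : ℕ) : ℝ :=
  Polynomial.eval a (ascPochhammer ℝ n) * Polynomial.eval b (ascPochhammer ℝ n) /
      (Polynomial.eval c (ascPochhammer ℝ n) * (Nat.factorial n : ℝ))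

lemma coeff_le_one (n : ℕ) : cc (1/4) (3/4) (1/2) n ≤ 1 := by
  have h2 := ascPos (1/2) (by norm_num) n
  have hfac : (0:ℝ) < (Nat.factorial n : ℝ) := by positivity
  rw [cc, div_le_one (by positivity)]
  have hA : Polynomial.eval (1/4 : ℝ) (ascPochhammer ℝ n) ≤
      Polynomial.eval (1/2 : ℝ) (ascPochhammer ℝ n) := ascMono _ _ (by norm_num) (by norm_num) n
  have hB : Polynomial.eval (3/4 : ℝ) (ascPochhammer ℝ n) ≤ (Nat.factorial n : ℝ) := by
    have := ascMono (3/4) 1 (by norm_num) (by norm_num) n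
    rwa [ascPochhammer_eval_one] at this
  have h1 := ascPos (1/4) (by norm_num) n
  have h3 := ascPos (3/4) (by norm_num) n
  exact mul_le_mul hA hB (le_of_lt h3) (le_of_lt h2)

lemma coeff_nonneg (n : ℕ) : 0 ≤ cc (1/4) (3/4) (1/2) n := by
  have h1 := ascPos (1/4) (by norm_num) n
  have h2 := ascPos (1/2) (by norm_num) n
  have h3 := ascPos (3/4) (by norm_num) n
  have hfac : (0:ℝ) < (Nat.factorial n : ℝ) := by positivity
  rw [cc]; positivity

lemma factProd (n : ℕ) : ((Nat.factorial n : ℕ) : ℝ) = ∏ i ∈ Finset.range n, ((i:ℝ) + 1) := by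
  induction n with
  | zero => simp
  | succ k ih => rw [Nat.factorial_succ, prod_range_succ, ← ih]; push_cast; ring

lemma wallisProd (n : ℕ) :
    ∏ i ∈ Finset.range n, (2 * (i:ℝ) + 1) / (2 * i + 2) =
      Polynomial.eval (1/2 : ℝ) (ascPochhammer ℝ n) / (Nat.factorial n : ℝ) := by
  rw [evalAsc, factProd, ← Finset.prod_div_distrib]
  refine Finset.prod_congr rfl fun i _ => ?_
  have h1 : (2 * (i:ℝ) + 2) ≠ 0 := by positivity
  have h2 : ((i:ℝ) + 1) ≠ 0 := by positivity
  field_simp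
  ring

lemma sinpow (n : ℕ) :
    (∫ t in (0:ℝ)..(π/2), Real.sin t ^ (2*n)) =
      π/2 * (Polynomial.eval (1/2 : ℝ) (ascPochhammer ℝ n) / (Nat.factorial n : ℝ)) := by
  rw [← wallisProd]
  induction n with
  | zero => simp
  | succ k ih =>
    rw [prod_range_succ_comm, mul_left_comm, ← ih, Nat.mul_succ, integral_sin_pow]
    norm_num


theorem stmt1' (κ : ℝ) (hκ₀ : 0 < κ) (hκ₁ : κ < 1) :
    (∫ t in (0:ℝ)..(π/2), ∑' n : ℕ, cc (1/4) (3/4) (1/2) n * (κ^2 * Real.sin t ^ 2) ^ n) =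
      π / 2 * ∑' n : ℕ, cc (1/4) (3/4) 1 n * (κ^2) ^ n := by
  have hκ2 : κ^2 < 1 := by nlinarith
  have hκ2' : (0:ℝ) ≤ κ^2 := by positivity
  set f : ℕ → ℝ → ℝ := fun n t => cc (1/4) (3/4) (1/2) n * (κ^2 * Real.sin t ^ 2) ^ n with hf
  have hcont : ∀ n, Continuous (f n) := fun n => by fun_prop
  have hbd : ∀ n t, ‖f n t‖ ≤ (κ^2)^n := by
    intro n t
    have h1 : (0:ℝ) ≤ (κ^2 * Real.sin t ^ 2) ^ n := by positivity
    rw [hf, Real.norm_eq_abs, abs_of_nonneg (mul_nonneg (coeff_nonneg n) h1)]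
    calc cc (1/4) (3/4) (1/2) n * (κ^2 * Real.sin t ^ 2) ^ n
        ≤ 1 * (κ^2 * Real.sin t ^ 2) ^ n := mul_le_mul_of_nonneg_right (coeff_le_one n) h1
      _ = (κ^2 * Real.sin t ^ 2) ^ n := one_mul _
      _ ≤ (κ^2)^n := by
          apply pow_le_pow_left₀ (by positivity)
          nlinarith [Real.sin_sq_le_one t]
  have hpi : (0:ℝ) ≤ π/2 := by positivity
  have hint : ∀ n, IntegrableOn (f n) (Set.Ioc 0 (π/2)) volume :=
    fun n => (hcont n).integrableOn_Ioc
  have hsum : Summable fun n => ∫ t in Set.Ioc (0:ℝ) (π/2), ‖f n t‖ := by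
    refine Summable.of_nonneg_of_le (fun n => integral_nonneg fun t => norm_nonneg _)
      (fun n => ?_) ((summable_geometric_of_lt_one hκ2' hκ2).mul_left (π/2))
    calc (∫ t in Set.Ioc (0:ℝ) (π/2), ‖f n t‖)
          ≤ ∫ _t in Set.Ioc (0:ℝ) (π/2), (κ^2)^n := by
            apply setIntegral_mono_on (hint n).norm
              (integrableOn_const measure_Ioc_lt_top.ne) measurableSet_Ioc
            exact fun t _ => hbd n t
        _ = (volume (Set.Ioc (0:ℝ) (π/2))).toReal * (κ^2)^n := by
            rw [setIntegral_const]; rfl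
        _ = π/2 * (κ^2)^n := by
            rw [Real.volume_Ioc]
            norm_num [ENNReal.toReal_ofReal hpi]
  have hswap := integral_tsum_of_summable_integral_norm (μ := volume.restrict (Set.Ioc (0:ℝ) (π/2)))
    hint hsum
  rw [intervalIntegral.integral_of_le hpi, ← hswap]
  have hterm : ∀ n : ℕ, (∫ t in Set.Ioc (0:ℝ) (π/2), f n t) =
      π/2 * (cc (1/4) (3/4) 1 n * (κ^2)^n) := by
    intro n
    rw [← intervalIntegral.integral_of_le hpi]
    have : ∀ t : ℝ, f n t = cc (1/4) (3/4) (1/2) n * (κ^2)^n * Real.sin t ^ (2*n) := by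
      intro t; rw [hf]; simp only [mul_pow, pow_mul]; ring
    simp_rw [this]
    rw [intervalIntegral.integral_const_mul, sinpow]
    have h2 := (ascPos (1/2) (by norm_num) n).ne'
    have hfac : ((Nat.factorial n : ℕ) : ℝ) ≠ 0 := by positivity
    rw [cc, cc, ascPochhammer_eval_one]
    field_simp
  rw [tsum_congr hterm, tsum_mul_left]


/-- The Gauss hypergeometric series `F(a, b; c; x)` with real parameters. -/
noncomputable def hyperF (a b c x : ℝ) : ℝ :=
  ∑' n : ℕ, (Polynomial.eval a (ascPochhammer ℝ n) * Polynomial.eval b (ascPochhammer ℝ n) /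
      (Polynomial.eval c (ascPochhammer ℝ n) * (Nat.factorial n : ℝ))) * x ^ n

/-- `G κ T = ∫₀^T F(1/4, 3/4; 1/2; κ² sin² t) dt`. -/
noncomputable def G (κ T : ℝ) : ℝ :=
  ∫ t in (0:ℝ)..T, hyperF (1/4) (3/4) (1/2) (κ ^ 2 * Real.sin t ^ 2)

/-- The complete integral `K = G κ (π/2)`. -/
noncomputable def K (κ : ℝ) : ℝ := G κ (Real.pi / 2)

/-- The auxiliary function `ψ = arcsin (κ sin φ)`. -/
noncomputable def psi (κ : ℝ) (φ : ℝ → ℝ) (u : ℝ) : ℝ :=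
  Real.arcsin (κ * Real.sin (φ u))

/-- The root function `rn = sin (ψ/2)`. -/
noncomputable def rn (κ : ℝ) (φ : ℝ → ℝ) (u : ℝ) : ℝ :=
  Real.sin (psi κ φ u / 2)

theorem stmt1 (κ : ℝ) (hκ₀ : 0 < κ) (hκ₁ : κ < 1) :
    K κ = Real.pi / 2 * hyperF (1/4) (3/4) 1 (κ ^ 2) := by
  exact stmt1' κ hκ₀ hκ₁
end

section
/- For every modulus κ with 0 < κ < 1, the function φ : ℝ → ℝ is differentiable and its derivative satisfies φ'(u) = cos(ψ(u)) / cos(ψ(u)/2) for all real u. -/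
open Real

set_option maxHeartbeats 1000000

namespace Stmt8Aux

/-- coefficients of the binomial series for `(1-x)^(-1/2)` -/
noncomputable def c (k : ℕ) : ℝ :=
  Polynomial.eval (1/2 : ℝ) (ascPochhammer ℝ k) / (Nat.factorial k : ℝ)

lemma poch_succ (x : ℝ) (k : ℕ) :
    Polynomial.eval x (ascPochhammer ℝ (k+1)) =
      Polynomial.eval x (ascPochhammer ℝ k) * (x + k) := by
  rw [ascPochhammer_succ_right]
  simp [Polynomial.eval_mul]

lemma poch_pos {x : ℝ} (hx : 0 < x) (k : ℕ) :
    0 < Polynomial.eval x (ascPochhammer ℝ k) := by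
  induction k with
  | zero => simp
  | succ n ih =>
      rw [poch_succ]
      exact mul_pos ih (by positivity)

lemma c_zero : c 0 = 1 := by simp [c]

lemma c_pos (k : ℕ) : 0 < c k := by
  have := poch_pos (by norm_num : (0:ℝ) < 1/2) k
  have : (0:ℝ) < (Nat.factorial k : ℝ) := by positivity
  unfold c
  positivity

lemma c_succ (k : ℕ) : (k + 1 : ℝ) * c (k+1) = (k + 1/2) * c k := by
  unfold c
  rw [poch_succ, Nat.factorial_succ]
  have h1 : ((Nat.factorial k : ℝ)) ≠ 0 := by positivity
  have h2 : ((k:ℝ) + 1) ≠ 0 := by positivity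
  push_cast
  field_simp
  ring

lemma c_succ_le (k : ℕ) : c (k+1) ≤ c k := by
  have h := c_succ k
  nlinarith [c_pos k, c_pos (k+1)]

lemma c_le_one (k : ℕ) : c k ≤ 1 := by
  induction k with
  | zero => simp [c_zero]
  | succ n ih => exact (c_succ_le n).trans ih

lemma summable_c {x : ℝ} (hx : |x| < 1) : Summable (fun k => c k * x ^ k) := by
  apply Summable.of_norm
  apply Summable.of_nonneg_of_le (fun k => norm_nonneg _)
    (fun k => ?_) (summable_geometric_of_lt_one (abs_nonneg x) hx)
  rw [Real.norm_eq_abs, abs_mul, abs_pow, abs_of_pos (c_pos k)]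
  calc c k * |x| ^ k ≤ 1 * |x| ^ k := by
        apply mul_le_mul_of_nonneg_right (c_le_one k) (by positivity)
    _ = |x| ^ k := one_mul _

/-- the sum of the binomial series -/
noncomputable def u (x : ℝ) : ℝ := ∑' k, c k * x ^ k

lemma hasSum_u {x : ℝ} (hx : |x| < 1) : HasSum (fun k => c k * x ^ k) (u x) :=
  (summable_c hx).hasSum

/-- the Vandermonde-type convolution identity -/
lemma conv (n : ℕ) : ∑ i ∈ Finset.range (n+1), c i * c (n - i) = 1 := by
  have key : ∀ m : ℕ, ∑ i ∈ Finset.range (m+1), (i:ℝ) * (c i * c (m - i))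
      = (m:ℝ)/2 * ∑ i ∈ Finset.range (m+1), c i * c (m - i) := by
    intro m
    have hrefl : ∑ i ∈ Finset.range (m+1), (i:ℝ) * (c i * c (m - i))
        = ∑ i ∈ Finset.range (m+1), ((m - i : ℕ) : ℝ) * (c (m - i) * c (m - (m - i))) := by
      have := Finset.sum_range_reflect (fun i => (i:ℝ) * (c i * c (m - i))) (m+1)
      rw [← this]
      apply Finset.sum_congr rfl
      intro i hi
      simp only [Finset.mem_range] at hi
      have hi' : i ≤ m := Nat.lt_succ_iff.mp hi
      congr 2 <;> omega
    have h2 : (2:ℝ) * ∑ i ∈ Finset.range (m+1), (i:ℝ) * (c i * c (m - i))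
        = ∑ i ∈ Finset.range (m+1), (m:ℝ) * (c i * c (m - i)) := by
      rw [two_mul]
      nth_rewrite 2 [hrefl]
      rw [← Finset.sum_add_distrib]
      apply Finset.sum_congr rfl
      intro i hi
      simp only [Finset.mem_range] at hi
      have hi' : i ≤ m := Nat.lt_succ_iff.mp hi
      have hmm : m - (m - i) = i := by omega
      rw [hmm]
      have hcast : ((m - i : ℕ) : ℝ) = (m:ℝ) - (i:ℝ) := by
        rw [Nat.cast_sub hi']
      rw [hcast]
      ring
    rw [← Finset.mul_sum] at h2
    linarith
  induction n with
  | zero => simp [c_zero]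
  | succ n ih =>
      have hS1 : ∑ i ∈ Finset.range (n+2), (i:ℝ) * (c i * c (n+1 - i))
          = ((n:ℝ)+1)/2 * ∑ i ∈ Finset.range (n+2), c i * c (n+1 - i) := by
        have := key (n+1)
        push_cast at this ⊢
        exact this
      have hS2 : ∑ i ∈ Finset.range (n+2), (i:ℝ) * (c i * c (n+1 - i))
          = ((n:ℝ)+1)/2 * ∑ i ∈ Finset.range (n+1), c i * c (n - i) := by
        rw [Finset.sum_range_succ' (fun i => (i:ℝ) * (c i * c (n+1 - i))) (n+1)]
        simp only [Nat.cast_zero, zero_mul, add_zero, Nat.cast_succ]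
        have hterm : ∀ i : ℕ, ((i:ℝ)+1) * (c (i+1) * c (n+1 - (i+1)))
            = ((i:ℝ) + 1/2) * (c i * c (n - i)) := by
          intro i
          have h := c_succ i
          have hsub : n + 1 - (i+1) = n - i := by omega
          rw [hsub]
          nlinarith [c_pos (n - i)]
        calc ∑ i ∈ Finset.range (n+1), ((i:ℝ)+1) * (c (i+1) * c (n+1 - (i+1)))
            = ∑ i ∈ Finset.range (n+1), (((i:ℝ)) * (c i * c (n - i)) + 1/2 * (c i * c (n - i))) := by
              apply Finset.sum_congr rfl
              intro i _
              rw [hterm i]; ring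
          _ = (n:ℝ)/2 * (∑ i ∈ Finset.range (n+1), c i * c (n - i))
              + 1/2 * ∑ i ∈ Finset.range (n+1), c i * c (n - i) := by
              rw [Finset.sum_add_distrib, key n, ← Finset.mul_sum]
          _ = ((n:ℝ)+1)/2 * ∑ i ∈ Finset.range (n+1), c i * c (n - i) := by ring
      have hn1 : ((n:ℝ)+1)/2 ≠ 0 := by positivity
      have heq : ∑ i ∈ Finset.range (n+2), c i * c (n+1 - i)
          = ∑ i ∈ Finset.range (n+1), c i * c (n - i) :=
        mul_left_cancel₀ hn1 (hS1.symm.trans hS2)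
      rw [show n+1+1 = n+2 from rfl, heq, ih]

lemma u_sq {x : ℝ} (hx : |x| < 1) : u x * u x = (1 - x)⁻¹ := by
  have hnorm : Summable (fun k => ‖c k * x ^ k‖) := by
    rw [summable_norm_iff]; exact summable_c hx
  rw [u, tsum_mul_tsum_eq_tsum_sum_antidiagonal_of_summable_norm hnorm hnorm]
  have hterm : ∀ n : ℕ, (∑ p ∈ Finset.HasAntidiagonal.antidiagonal n, (c p.1 * x ^ p.1) * (c p.2 * x ^ p.2))
      = x ^ n := by
    intro n
    have : ∀ p ∈ Finset.HasAntidiagonal.antidiagonal n, (c p.1 * x ^ p.1) * (c p.2 * x ^ p.2)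
        = (c p.1 * c p.2) * x ^ n := by
      intro p hp
      rw [Finset.HasAntidiagonal.mem_antidiagonal] at hp
      rw [← hp, pow_add]; ring
    rw [Finset.sum_congr rfl this, ← Finset.sum_mul]
    rw [Finset.Nat.sum_antidiagonal_eq_sum_range_succ_mk (fun p => c p.1 * c p.2) n]
    simp only
    rw [conv n, one_mul]
  rw [tsum_congr hterm, tsum_geometric_of_abs_lt_one hx]

lemma u_pos {x : ℝ} (hx : |x| < 1) : 0 < u x := by
  have hs := summable_c hx
  have hinj2 : Function.Injective (fun n : ℕ => 2 * n) := fun a b h => by dsimp at h; omega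
  have hinj2' : Function.Injective (fun n : ℕ => 2 * n + 1) := fun a b h => by dsimp at h; omega
  have hA : Summable (fun n => c (2*n) * x ^ (2*n)) := hs.comp_injective hinj2
  have hB : Summable (fun n => c (2*n+1) * x ^ (2*n+1)) := hs.comp_injective hinj2'
  have huAB : u x = (∑' n, c (2*n) * x ^ (2*n)) + ∑' n, c (2*n+1) * x ^ (2*n+1) := by
    rw [u]
    exact (HasSum.even_add_odd (f := fun k => c k * x ^ k) hA.hasSum hB.hasSum).tsum_eq
  have hxsq : ∀ n : ℕ, |x| ^ (2*n) = x ^ (2*n) := by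
    intro n
    rw [pow_mul, pow_mul, sq_abs]
  have hA1 : (1:ℝ) ≤ ∑' n, c (2*n) * x ^ (2*n) := by
    have h := Summable.le_tsum hA 0 (fun i _ => by
      have hc := c_pos (2*i)
      have hp : (0:ℝ) ≤ x ^ (2*i) := by rw [← hxsq]; positivity
      positivity)
    simpa [c_zero] using h
  have hBabs : Summable (fun n => |c (2*n+1) * x ^ (2*n+1)|) := by
    rw [summable_abs_iff]; exact hB
  have h1 : |∑' n, c (2*n+1) * x ^ (2*n+1)| ≤ ∑' n, |c (2*n+1) * x ^ (2*n+1)| := by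
    have := norm_tsum_le_tsum_norm (f := fun n => c (2*n+1) * x ^ (2*n+1)) (by
      simp only [Real.norm_eq_abs]; exact hBabs)
    simpa only [Real.norm_eq_abs] using this
  have h2 : ∑' n, |c (2*n+1) * x ^ (2*n+1)| ≤ ∑' n, |x| * (c (2*n) * x ^ (2*n)) := by
    apply Summable.tsum_le_tsum _ hBabs (hA.mul_left _)
    intro n
    rw [abs_mul, abs_of_pos (c_pos _), abs_pow, pow_succ, hxsq]
    have h3 : c (2*n+1) ≤ c (2*n) := c_succ_le _
    have h4 : 0 ≤ x ^ (2*n) := by rw [← hxsq]; positivity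
    nlinarith [c_pos (2*n+1), abs_nonneg x,
      mul_nonneg (mul_nonneg (sub_nonneg.mpr h3) h4) (abs_nonneg x)]
  have h5 : ∑' n, |x| * (c (2*n) * x ^ (2*n)) = |x| * ∑' n, c (2*n) * x ^ (2*n) :=
    tsum_mul_left
  have hBle : |∑' n, c (2*n+1) * x ^ (2*n+1)| ≤ |x| * ∑' n, c (2*n) * x ^ (2*n) := by
    rw [← h5]; exact h1.trans h2
  have habs := abs_le.mp hBle
  rw [huAB]
  nlinarith [abs_nonneg x, hA1]

lemma u_eq {x : ℝ} (hx : |x| < 1) : u x = (Real.sqrt (1 - x))⁻¹ := by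
  have h1 : (0:ℝ) < 1 - x := by
    have := abs_lt.mp hx; linarith
  have h2 := u_sq hx
  have h3 := u_pos hx
  have : u x = Real.sqrt ((1-x)⁻¹) := by
    rw [← Real.sqrt_sq h3.le]
    congr 1
    rw [sq]; exact h2
  rw [this, Real.sqrt_inv]


lemma key_poch (n : ℕ) :
    Polynomial.eval (1/4 : ℝ) (ascPochhammer ℝ n) * Polynomial.eval (3/4 : ℝ) (ascPochhammer ℝ n)
      * ((2*n).factorial : ℝ)
    = Polynomial.eval (1/2 : ℝ) (ascPochhammer ℝ (2*n))
      * Polynomial.eval (1/2 : ℝ) (ascPochhammer ℝ n) * (n.factorial : ℝ) := by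
  induction n with
  | zero => simp
  | succ n ih =>
      rw [show 2*(n+1) = (2*n+1)+1 by ring, poch_succ (1/2 : ℝ) (2*n+1),
        poch_succ (1/2 : ℝ) (2*n), poch_succ (1/4 : ℝ) n, poch_succ (3/4 : ℝ) n,
        poch_succ (1/2 : ℝ) n]
      have hf1 : ((2*n+1+1).factorial : ℝ)
          = ((2*n).factorial : ℝ) * ((2*n:ℝ)+1) * ((2*n:ℝ)+2) := by
        rw [Nat.factorial_succ, Nat.factorial_succ]; push_cast; ring
      have hf2 : ((n+1).factorial : ℝ) = (n.factorial : ℝ) * ((n:ℝ)+1) := by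
        rw [Nat.factorial_succ]; push_cast; ring
      rw [hf1, hf2]
      push_cast
      linear_combination ((1/4 + (n:ℝ)) * (3/4 + (n:ℝ)) * (2*(n:ℝ)+1) * (2*(n:ℝ)+2)) * ih

lemma coeff_eq (n : ℕ) :
    Polynomial.eval (1/4 : ℝ) (ascPochhammer ℝ n) * Polynomial.eval (3/4 : ℝ) (ascPochhammer ℝ n)
      / (Polynomial.eval (1/2 : ℝ) (ascPochhammer ℝ n) * (Nat.factorial n : ℝ))
    = c (2*n) := by
  have hH := poch_pos (by norm_num : (0:ℝ) < 1/2) n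
  have hF : (0:ℝ) < (Nat.factorial n : ℝ) := by positivity
  have hF2 : (0:ℝ) < ((2*n).factorial : ℝ) := by positivity
  rw [c, div_eq_div_iff (by positivity) (by positivity)]
  linear_combination key_poch n

lemma hyperF_eq {z : ℝ} (hz : |z| < 1) :
    hyperF (1/4) (3/4) (1/2) (z^2)
      = ((Real.sqrt (1-z))⁻¹ + (Real.sqrt (1+z))⁻¹)/2 := by
  have h1 := hasSum_u hz
  have hz' : |(-z)| < 1 := by rwa [abs_neg]
  have h2 := hasSum_u hz'
  have h3 : HasSum (fun k => (c k * z^k + c k * (-z)^k)/2) ((u z + u (-z))/2) :=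
    (h1.add h2).div_const 2
  have hinj : Function.Injective (fun n : ℕ => 2*n) := fun a b h => by dsimp at h; omega
  have hodd : ∀ k ∉ Set.range (fun n : ℕ => 2*n), (c k * z^k + c k * (-z)^k)/2 = 0 := by
    intro k hk
    have hko : Odd k := by
      rcases Nat.even_or_odd k with he | ho
      · obtain ⟨m, hm⟩ := he
        exact absurd ⟨m, by dsimp only; omega⟩ hk
      · exact ho
    rw [hko.neg_pow]
    ring
  have h4 : HasSum (fun n => (c (2*n) * z^(2*n) + c (2*n) * (-z)^(2*n))/2) ((u z + u (-z))/2) :=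
    (Function.Injective.hasSum_iff hinj hodd).mpr h3
  have hfun : (fun n => (c (2*n) * z^(2*n) + c (2*n) * (-z)^(2*n))/2)
      = fun n => c (2*n) * (z^2)^n := by
    funext n
    rw [Even.neg_pow ⟨n, by ring⟩, ← pow_mul]
    ring
  rw [hfun] at h4
  have h5 : hyperF (1/4) (3/4) (1/2) (z^2) = ∑' n, c (2*n) * (z^2)^n := by
    rw [hyperF]
    exact tsum_congr fun n => by rw [coeff_eq]
  rw [h5, h4.tsum_eq, u_eq hz, u_eq hz']
  rw [show 1 - (-z) = 1 + z by ring]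

lemma closed {z : ℝ} (hz : |z| < 1) :
    ((Real.sqrt (1-z))⁻¹ + (Real.sqrt (1+z))⁻¹)/2
      = Real.cos (Real.arcsin z / 2) / Real.cos (Real.arcsin z) := by
  obtain ⟨hz1, hz2⟩ := abs_lt.mp hz
  have ha : (0:ℝ) < 1 - z := by linarith
  have hb : (0:ℝ) < 1 + z := by linarith
  have hapos : 0 < Real.sqrt (1-z) := Real.sqrt_pos.mpr ha
  have hbpos : 0 < Real.sqrt (1+z) := Real.sqrt_pos.mpr hb
  have ha2 : Real.sqrt (1-z) ^ 2 = 1 - z := Real.sq_sqrt ha.le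
  have hb2 : Real.sqrt (1+z) ^ 2 = 1 + z := Real.sq_sqrt hb.le
  have hcos : Real.cos (Real.arcsin z) = Real.sqrt (1-z) * Real.sqrt (1+z) := by
    rw [Real.cos_arcsin, show 1 - z^2 = (1-z)*(1+z) by ring, Real.sqrt_mul ha.le]
  have hpi := Real.pi_pos
  have hb1 := Real.neg_pi_div_two_le_arcsin z
  have hb2' := Real.arcsin_le_pi_div_two z
  have hhalf : Real.cos (Real.arcsin z / 2)
      = Real.sqrt ((1 + Real.cos (Real.arcsin z))/2) :=
    Real.cos_half (by linarith) (by linarith)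
  have hsq : (1 + Real.sqrt (1-z) * Real.sqrt (1+z))/2
      = ((Real.sqrt (1-z) + Real.sqrt (1+z))/2)^2 := by
    linear_combination (-1/4) * ha2 - (1/4) * hb2
  have hval : Real.cos (Real.arcsin z / 2)
      = (Real.sqrt (1-z) + Real.sqrt (1+z))/2 := by
    rw [hhalf, hcos, hsq, Real.sqrt_sq (by positivity)]
  rw [hval, hcos]
  field_simp
  ring

end Stmt8Aux

theorem stmt8 (κ : ℝ) (hκ₀ : 0 < κ) (hκ₁ : κ < 1)
    (φ : ℝ → ℝ) (hφ₁ : Function.LeftInverse φ (G κ))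
    (hφ₂ : Function.RightInverse φ (G κ)) :
    Differentiable ℝ φ ∧
      ∀ u : ℝ, deriv φ u = Real.cos (psi κ φ u) / Real.cos (psi κ φ u / 2) := by
  have hz : ∀ t : ℝ, |κ * Real.sin t| < 1 := by
    intro t
    have hsin : |Real.sin t| ≤ 1 := abs_le.mpr ⟨Real.neg_one_le_sin t, Real.sin_le_one t⟩
    calc |κ * Real.sin t| = κ * |Real.sin t| := by rw [abs_mul, abs_of_pos hκ₀]
      _ ≤ κ * 1 := mul_le_mul_of_nonneg_left hsin hκ₀.le
      _ < 1 := by linarith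
  set f : ℝ → ℝ := fun t =>
    Real.cos (Real.arcsin (κ * Real.sin t) / 2) / Real.cos (Real.arcsin (κ * Real.sin t)) with hf
  have hfeq : ∀ t, hyperF (1/4) (3/4) (1/2) (κ^2 * Real.sin t^2) = f t := by
    intro t
    have h1 : κ^2 * Real.sin t^2 = (κ * Real.sin t)^2 := by ring
    rw [h1, Stmt8Aux.hyperF_eq (hz t), Stmt8Aux.closed (hz t)]
  have hGf : G κ = fun T => ∫ t in (0:ℝ)..T, f t := by
    funext T
    rw [G]
    exact intervalIntegral.integral_congr fun x _ => hfeq x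
  have hcospos : ∀ t : ℝ, 0 < Real.cos (Real.arcsin (κ * Real.sin t)) := by
    intro t
    rw [Real.cos_arcsin]
    have h1 := hz t
    have h2 : (κ * Real.sin t)^2 < 1 := by
      nlinarith [abs_nonneg (κ * Real.sin t), sq_abs (κ * Real.sin t)]
    exact Real.sqrt_pos.mpr (by linarith)
  have hpi := Real.pi_pos
  have hcoshalfpos : ∀ t : ℝ, 0 < Real.cos (Real.arcsin (κ * Real.sin t) / 2) := by
    intro t
    have hb1 := Real.neg_pi_div_two_le_arcsin (κ * Real.sin t)
    have hb2 := Real.arcsin_le_pi_div_two (κ * Real.sin t)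
    exact Real.cos_pos_of_mem_Ioo ⟨by linarith, by linarith⟩
  have hfpos : ∀ t, 0 < f t := fun t => div_pos (hcoshalfpos t) (hcospos t)
  have hfc : Continuous f := by
    apply Continuous.div
    · exact Real.continuous_cos.comp
        ((Real.continuous_arcsin.comp (continuous_const.mul Real.continuous_sin)).div_const 2)
    · exact Real.continuous_cos.comp
        (Real.continuous_arcsin.comp (continuous_const.mul Real.continuous_sin))
    · exact fun t => (hcospos t).ne'
  have hG : ∀ T : ℝ, HasDerivAt (G κ) (f T) T := by
    intro T
    rw [hGf]
    exact (hfc.integral_hasStrictDerivAt 0 T).hasDerivAt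
  have hGmono : StrictMono (G κ) := strictMono_of_hasDerivAt_pos hG hfpos
  have hφmono : Monotone φ := by
    intro a b hab
    by_contra h
    push_neg at h
    have h2 := hGmono h
    rw [hφ₂ a, hφ₂ b] at h2
    exact absurd hab (not_le.mpr h2)
  have hφsurj : Function.Surjective φ := fun x => ⟨G κ x, hφ₁ x⟩
  have hφc : Continuous φ := Monotone.continuous_of_surjective hφmono hφsurj
  have hd : ∀ u : ℝ, HasDerivAt φ ((f (φ u))⁻¹) u := fun u =>
    HasDerivAt.of_local_left_inverse hφc.continuousAt (hG (φ u)) (hfpos (φ u)).ne'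
      (Filter.Eventually.of_forall fun y => hφ₂ y)
  refine ⟨fun u => (hd u).differentiableAt, fun u => ?_⟩
  rw [(hd u).deriv, hf]
  rw [inv_div]
  rfl
end

section
/- For every modulus κ with 0 < κ < 1, the function rn : ℝ → ℝ is differentiable and rn'(u) = (κ/2)·cos(φ(u)) for all real u. -/
open Real MeasureTheory Topology

noncomputable def cb (n : ℕ) : ℝ := (Nat.centralBinom n : ℝ)

lemma cb_pos (n : ℕ) : 0 < cb n := by unfold cb; exact_mod_cast Nat.centralBinom_pos n

lemma cb_rec (n : ℕ) : ((n:ℝ) + 1) * cb (n+1) = 2 * (2*n+1) * cb n := by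
  have := Nat.succ_mul_centralBinom_succ n
  have : ((n + 1) * Nat.centralBinom (n + 1) : ℝ) = (2 * (2 * n + 1) * Nat.centralBinom n : ℝ) := by
    exact_mod_cast congrArg (Nat.cast : ℕ → ℝ) this
  push_cast at this
  push_cast [cb]
  linarith

lemma cb_le (n : ℕ) : cb n ≤ 4 ^ n := by
  induction n with
  | zero => simp [cb, Nat.centralBinom_zero]
  | succ n ih =>
    have h := cb_rec n
    have hn : (0:ℝ) < (n:ℝ) + 1 := by positivity
    have : cb (n+1) = 2 * (2*n+1) * cb n / ((n:ℝ)+1) := by field_simp; linarith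
    rw [this]
    rw [div_le_iff₀ hn]
    have : (2:ℝ) * (2*n+1) ≤ 4 * ((n:ℝ)+1) := by ring_nf; linarith
    calc 2 * (2*(n:ℝ)+1) * cb n ≤ 4 * ((n:ℝ)+1) * cb n := by
          apply mul_le_mul_of_nonneg_right this (cb_pos n).le
      _ ≤ 4 * ((n:ℝ)+1) * 4^n := by
          apply mul_le_mul_of_nonneg_left ih (by positivity)
      _ = 4 ^ (n+1) * ((n:ℝ)+1) := by ring


lemma summable_cb {t : ℝ} (ht : |t| < 1/4) : Summable (fun n => cb n * t ^ n) := by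
  apply Summable.of_norm_bounded (g := fun n => (4 * |t|) ^ n)
  · exact summable_geometric_of_lt_one (by positivity) (by linarith)
  · intro n
    rw [norm_mul, norm_pow]
    calc ‖cb n‖ * |t| ^ n ≤ 4 ^ n * |t| ^ n := by
          apply mul_le_mul_of_nonneg_right _ (by positivity)
          rw [Real.norm_eq_abs, abs_of_pos (cb_pos n)]; exact cb_le n
      _ = (4 * |t|) ^ n := by rw [mul_pow]

noncomputable def Scb (t : ℝ) : ℝ := ∑' n, cb n * t ^ n

lemma hasDerivAt_Scb {t : ℝ} (ht : |t| < 1/4) :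
    HasDerivAt Scb (∑' n, cb n * ((n:ℝ) * t ^ (n-1))) t := by
  obtain ⟨r, hrpos, htr, hr4⟩ : ∃ r : ℝ, 0 < r ∧ |t| < r ∧ r < 1/4 :=
    ⟨(|t| + 1/4)/2, by positivity, by linarith, by linarith⟩
  have h4r : 4 * r < 1 := by linarith
  have hu : Summable (fun n : ℕ => (1/r) * ((n:ℝ) * (4*r) ^ n)) := by
    apply Summable.mul_left
    have := summable_pow_mul_geometric_of_norm_lt_one (R := ℝ) (r := 4*r) 1
      (by rw [Real.norm_eq_abs, abs_of_pos (by positivity)]; exact h4r)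
    simpa using this
  unfold Scb
  apply hasDerivAt_tsum_of_isPreconnected (g := fun (n:ℕ) (z:ℝ) => cb n * z ^ n)
    (g' := fun (n:ℕ) (z:ℝ) => cb n * ((n:ℝ) * z ^ (n-1)))
    (u := fun n : ℕ => (1/r) * ((n:ℝ) * (4*r) ^ n)) (t := Metric.ball (0:ℝ) r)
    (y₀ := 0) hu Metric.isOpen_ball (convex_ball (0:ℝ) r).isPreconnected
  · intro n y _
    exact (hasDerivAt_pow n y).const_mul (cb n)
  · intro n y hy
    rw [Metric.mem_ball, Real.dist_eq, sub_zero] at hy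
    rw [Real.norm_eq_abs, abs_mul, abs_mul, abs_of_pos (cb_pos n)]
    rcases n with _ | m
    · simp
    · simp only [Nat.add_sub_cancel]
      have h2 : |y| ^ m ≤ r ^ m := pow_le_pow_left₀ (abs_nonneg y) hy.le m
      have key : cb (m+1) * (|(((m:ℕ)+1:ℕ):ℝ)| * |y ^ m|) ≤ 4^(m+1) * (((m:ℝ)+1) * r^m) := by
        push_cast
        rw [abs_of_pos (by positivity : (0:ℝ) < (m:ℝ)+1), abs_pow]
        apply mul_le_mul (cb_le (m+1)) (mul_le_mul_of_nonneg_left h2 (by positivity))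
          (by positivity) (by positivity)
      refine key.trans (le_of_eq ?_)
      have : ((4:ℝ)*r)^(m+1) = 4^(m+1) * r^(m+1) := by rw [mul_pow]
      push_cast
      rw [this]
      field_simp
      ring
  · exact Metric.mem_ball_self hrpos
  · exact summable_cb (by norm_num)
  · rw [Metric.mem_ball, Real.dist_eq, sub_zero]; exact htr

lemma summable_ncb {t : ℝ} (ht : |t| < 1/4) :
    Summable (fun n : ℕ => cb n * ((n:ℝ) * t ^ (n-1))) := by
  obtain ⟨r, hrpos, htr, hr4⟩ : ∃ r : ℝ, 0 < r ∧ |t| < r ∧ r < 1/4 :=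
    ⟨(|t| + 1/4)/2, by positivity, by linarith, by linarith⟩
  have h4r : 4 * r < 1 := by linarith
  apply Summable.of_norm_bounded (g := fun n : ℕ => (1/r) * ((n:ℝ) * (4*r) ^ n))
  · apply Summable.mul_left
    have := summable_pow_mul_geometric_of_norm_lt_one (R := ℝ) (r := 4*r) 1
      (by rw [Real.norm_eq_abs, abs_of_pos (by positivity)]; exact h4r)
    simpa using this
  · intro n
    rw [Real.norm_eq_abs, abs_mul, abs_mul, abs_of_pos (cb_pos n)]
    rcases n with _ | m
    · simp
    · simp only [Nat.add_sub_cancel]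
      have h2 : |t| ^ m ≤ r ^ m := pow_le_pow_left₀ (abs_nonneg t) htr.le m
      have key : cb (m+1) * (|(((m:ℕ)+1:ℕ):ℝ)| * |t ^ m|) ≤ 4^(m+1) * (((m:ℝ)+1) * r^m) := by
        push_cast
        rw [abs_of_pos (by positivity : (0:ℝ) < (m:ℝ)+1), abs_pow]
        apply mul_le_mul (cb_le (m+1)) (mul_le_mul_of_nonneg_left h2 (by positivity))
          (by positivity) (by positivity)
      refine key.trans (le_of_eq ?_)
      have : ((4:ℝ)*r)^(m+1) = 4^(m+1) * r^(m+1) := by rw [mul_pow]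
      push_cast
      rw [this]
      field_simp
      ring

lemma hasSum_telescope {t : ℝ} (ht : |t| < 1/4) :
    HasSum (fun n : ℕ => 4*(n:ℝ)*cb n*t^n - 4*((n:ℝ)+1)*cb (n+1)*t^(n+1)) 0 := by
  set h : ℕ → ℝ := fun n => 4*(n:ℝ)*cb n*t^n with hh
  have hsum : Summable h := by
    have := (summable_ncb ht).mul_left (4*t)
    apply this.congr
    intro n
    rcases n with _ | m
    · simp [hh]
    · simp only [hh, Nat.add_sub_cancel]
      push_cast
      ring
  have hlim : Filter.Tendsto h Filter.atTop (nhds 0) := hsum.tendsto_atTop_zero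
  have hsum2 : Summable (fun n => h (n+1)) := by
    rw [← summable_nat_add_iff 1] at hsum; exact hsum
  have hsub : Summable (fun n => h n - h (n+1)) := hsum.sub hsum2
  have key : HasSum (fun n => h n - h (n+1)) 0 := by
    rw [hsub.hasSum_iff_tendsto_nat]
    have heq : ∀ N, ∑ i ∈ Finset.range N, (h i - h (i+1)) = h 0 - h N := by
      intro N
      rw [Finset.sum_range_sub' h N]
    simp_rw [heq]
    have h0 : h 0 = 0 := by simp [hh]
    rw [h0]
    simpa using hlim.const_sub 0
  apply key.congr_fun
  intro n
  simp only [hh]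
  push_cast
  ring

lemma deriv_identity {t : ℝ} (ht : |t| < 1/4) :
    (1 - 4*t) * (∑' n : ℕ, cb n * ((n:ℝ) * t ^ (n-1))) = 2 * Scb t := by
  have hsum := summable_ncb ht
  rw [← tsum_mul_left]
  have hs2 : Summable (fun n : ℕ => (1-4*t) * (cb n * ((n:ℝ) * t ^ (n-1)))) :=
    hsum.mul_left _
  rw [Summable.tsum_eq_zero_add hs2]
  have hterm : ∀ n : ℕ, (1-4*t) * (cb (n+1) * (((n:ℕ)+1:ℕ) * t ^ ((n+1)-1)))
      = 2 * (cb n * t^n) + (4*(n:ℝ)*cb n*t^n - 4*((n:ℝ)+1)*cb (n+1)*t^(n+1)) := by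
    intro n
    have hrec := cb_rec n
    simp only [Nat.add_sub_cancel]
    push_cast
    linear_combination (t^n) * hrec
  rw [tsum_congr hterm]
  rw [(((summable_cb ht).mul_left 2).hasSum.add (hasSum_telescope ht)).tsum_eq]
  rw [add_zero, tsum_mul_left]
  simp [Scb]

lemma hasSum_cb {t : ℝ} (ht : |t| < 1/4) :
    HasSum (fun n : ℕ => cb n * t ^ n) (1 / Real.sqrt (1 - 4*t)) := by
  set Φ : ℝ → ℝ := fun y => Scb y * Real.sqrt (1 - 4*y) with hΦdef
  have hderiv : ∀ y : ℝ, |y| < 1/4 → HasDerivAt Φ 0 y := by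
    intro y hy
    have hypos : (0:ℝ) < 1 - 4*y := by
      rw [abs_lt] at hy; linarith
    have hsq : Real.sqrt (1-4*y) ^ 2 = 1 - 4*y := Real.sq_sqrt hypos.le
    have hsqpos : 0 < Real.sqrt (1-4*y) := Real.sqrt_pos.2 hypos
    have h1 : HasDerivAt (fun z : ℝ => 1 - 4*z) (-4) y := by
      simpa using ((hasDerivAt_id y).const_mul (4:ℝ)).const_sub 1
    have h2 : HasDerivAt (fun z : ℝ => Real.sqrt (1 - 4*z))
        (1/(2*Real.sqrt (1-4*y)) * (-4)) y :=
      (Real.hasDerivAt_sqrt hypos.ne').comp y h1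
    have h3 := (hasDerivAt_Scb hy).mul h2
    have hid := deriv_identity hy
    refine h3.congr_deriv ?_
    set D : ℝ := ∑' n : ℕ, cb n * ((n:ℝ) * y^(n-1)) with hD
    set q : ℝ := Real.sqrt (1 - 4*y) with hq
    have hstep : D * q + Scb y * (1 / (2*q) * -4) = (D * q^2 - 2*Scb y)/q := by
      field_simp
      ring
    rw [hstep, hsq, mul_comm D, hid]
    simp
  have hconst : ∀ y : ℝ, |y| < 1/4 → Φ y = Φ 0 := by
    intro y hy
    have hs : Convex ℝ (Set.Ioo (-(1/4):ℝ) (1/4)) := convex_Ioo _ _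
    have hmem : ∀ z : ℝ, |z| < 1/4 → z ∈ Set.Ioo (-(1/4):ℝ) (1/4) := by
      intro z hz; rw [abs_lt] at hz; exact ⟨hz.1, hz.2⟩
    have hd : ∀ z ∈ Set.Ioo (-(1/4):ℝ) (1/4), HasDerivAt Φ 0 z := by
      intro z hz
      exact hderiv z (abs_lt.2 ⟨hz.1, hz.2⟩)
    apply hs.is_const_of_fderivWithin_eq_zero
      (fun z hz => ((hd z hz).differentiableAt).differentiableWithinAt)
      (fun z hz => ?_) (hmem y hy) (hmem 0 (by norm_num))
    rw [fderivWithin_of_isOpen isOpen_Ioo hz, (hd z hz).hasFDerivAt.fderiv]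
    ext w
    simp
  have hΦ0 : Φ 0 = 1 := by
    have : Scb 0 = 1 := by
      rw [Scb, tsum_eq_single 0]
      · simp [cb, Nat.centralBinom_zero]
      · intro n hn
        simp [zero_pow hn]
    simp [hΦdef, this]
  have hpos : (0:ℝ) < 1 - 4*t := by rw [abs_lt] at ht; linarith
  have hne : Real.sqrt (1-4*t) ≠ 0 := (Real.sqrt_pos.2 hpos).ne'
  have : Scb t = 1 / Real.sqrt (1-4*t) := by
    have h := (hconst t ht).trans hΦ0
    rw [hΦdef] at h
    field_simp at h ⊢
    linarith
  rw [← this]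
  exact (summable_cb ht).hasSum


lemma coeff_eq (n : ℕ) :
    16^n * ((ascPochhammer ℝ n).eval (1/4:ℝ) * (ascPochhammer ℝ n).eval (3/4:ℝ))
      = cb (2*n) * ((ascPochhammer ℝ n).eval (1/2:ℝ) * (n.factorial : ℝ)) := by
  induction n with
  | zero => simp [cb, Nat.centralBinom_zero, ascPochhammer_zero]
  | succ n ih =>
    have h1 : (2*(n:ℝ)+2) * cb (2*n+1+1) = (8*(n:ℝ)+6) * cb (2*n+1) := by
      have := cb_rec (2*n+1); push_cast at this; linarith
    have h2 : (2*(n:ℝ)+1) * cb (2*n+1) = (8*(n:ℝ)+2) * cb (2*n) := by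
      have := cb_rec (2*n); push_cast at this; linarith
    rw [ascPochhammer_succ_eval, ascPochhammer_succ_eval, ascPochhammer_succ_eval,
      show 2*(n+1) = 2*n+1+1 from by ring, Nat.factorial_succ]
    push_cast
    linear_combination (16*(1/4+(n:ℝ))*(3/4+(n:ℝ))) * ih
      + ((ascPochhammer ℝ n).eval (1/2:ℝ) * (n.factorial : ℝ)) *
        ((-(2*(n:ℝ)+1)/4) * h1 + (-(4*(n:ℝ)+3)/2) * h2)



lemma hasSum_even {y : ℝ} (hy : |y| < 1) :
    HasSum (fun n : ℕ => cb (2*n) * ((y/4) ^ (2*n)))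
      (1/2 * (1 / Real.sqrt (1-y) + 1 / Real.sqrt (1+y))) := by
  set w := y/4 with hw
  have hw4 : |w| < 1/4 := by rw [hw, abs_div]; simp; linarith [abs_lt.1 hy]
  have hA := hasSum_cb hw4
  have hB := hasSum_cb (t := -w) (by rwa [abs_neg])
  have h1 : 1 - 4*w = 1 - y := by rw [hw]; ring
  have h2 : 1 - 4*(-w) = 1 + y := by rw [hw]; ring
  rw [h1] at hA
  rw [h2] at hB
  have hadd := hA.add hB
  have heven : HasSum (fun n : ℕ => cb (2*n) * w^(2*n) + cb (2*n) * (-w)^(2*n))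
      (1 / Real.sqrt (1-y) + 1 / Real.sqrt (1+y)) := by
    have hinj : Function.Injective (fun n : ℕ => 2*n) := fun a b h => by simp only at h; omega
    have hvan : ∀ x ∉ Set.range (fun n : ℕ => 2*n),
        cb x * w ^ x + cb x * (-w) ^ x = 0 := by
      intro x hx
      have hodd : Odd x := by
        rcases Nat.even_or_odd x with he | ho
        · obtain ⟨k, hk⟩ := he
          exact absurd ⟨k, by simp only; omega⟩ hx
        · exact ho
      rw [hodd.neg_pow]
      ring
    exact (Function.Injective.hasSum_iff hinj hvan).2 hadd
  have := heven.div_const 2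
  apply HasSum.congr_fun (f := fun n => (cb (2*n) * w^(2*n) + cb (2*n) * (-w)^(2*n))/2) ?_ ?_
  · rw [one_div_mul_eq_div]
    exact this
  · intro n
    rw [Even.neg_pow ⟨n, by ring⟩ w]
    ring

lemma hyperF_eq {y : ℝ} (hy : |y| < 1) :
    hyperF (1/4) (3/4) (1/2) (y^2)
      = 1/2 * (1 / Real.sqrt (1-y) + 1 / Real.sqrt (1+y)) := by
  rw [hyperF]
  rw [← (hasSum_even hy).tsum_eq]
  apply tsum_congr
  intro n
  have hpos : (0:ℝ) < (ascPochhammer ℝ n).eval (1/2:ℝ) :=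
    ascPochhammer_pos n _ (by norm_num)
  have hfac : (0:ℝ) < (n.factorial : ℝ) := by exact_mod_cast n.factorial_pos
  have hcoeff : (ascPochhammer ℝ n).eval (1/4:ℝ) * (ascPochhammer ℝ n).eval (3/4:ℝ) /
      ((ascPochhammer ℝ n).eval (1/2:ℝ) * (n.factorial : ℝ)) = cb (2*n) / 16^n := by
    rw [div_eq_div_iff (by positivity) (by positivity)]
    linear_combination coeff_eq n
  rw [hcoeff]
  have : (y^2)^n = 16^n * ((y/4)^(2*n)) := by
    rw [pow_mul]
    field_simp
    rw [div_pow, ← mul_div_assoc, eq_div_iff (by positivity)]; ring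
  rw [this]
  field_simp







noncomputable def fI (κ t : ℝ) : ℝ :=
  1/2 * (1 / Real.sqrt (1 - κ * Real.sin t) + 1 / Real.sqrt (1 + κ * Real.sin t))

section kappa
variable {κ : ℝ} (hκ₀ : 0 < κ) (hκ₁ : κ < 1)
include hκ₀ hκ₁

lemma abs_y_lt (t : ℝ) : |κ * Real.sin t| < 1 := by
  rw [abs_mul, abs_of_pos hκ₀]
  calc κ * |Real.sin t| ≤ κ * 1 := by
        exact mul_le_mul_of_nonneg_left (abs_sin_le_one t) hκ₀.le
    _ < 1 := by linarith

lemma one_sub_pos (t : ℝ) : 0 < 1 - κ * Real.sin t := by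
  have := abs_lt.1 (abs_y_lt hκ₀ hκ₁ t); linarith
lemma one_add_pos (t : ℝ) : 0 < 1 + κ * Real.sin t := by
  have := abs_lt.1 (abs_y_lt hκ₀ hκ₁ t); linarith

lemma integrand_eq (t : ℝ) :
    hyperF (1/4) (3/4) (1/2) (κ^2 * Real.sin t^2) = fI κ t := by
  have := hyperF_eq (abs_y_lt hκ₀ hκ₁ t)
  rw [show κ^2 * Real.sin t^2 = (κ * Real.sin t)^2 from by ring, this, fI]

lemma fI_pos (t : ℝ) : 0 < fI κ t := by
  have h1 := one_sub_pos hκ₀ hκ₁ t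
  have h2 := one_add_pos hκ₀ hκ₁ t
  rw [fI]
  positivity

lemma fI_cont : Continuous (fI κ) := by
  apply Continuous.mul continuous_const
  apply Continuous.add
  · apply Continuous.div continuous_const
    · exact (continuous_const.sub (continuous_const.mul Real.continuous_sin)).sqrt
    · intro t
      exact (Real.sqrt_pos.2 (one_sub_pos hκ₀ hκ₁ t)).ne'
  · apply Continuous.div continuous_const
    · exact (continuous_const.add (continuous_const.mul Real.continuous_sin)).sqrt
    · intro t
      exact (Real.sqrt_pos.2 (one_add_pos hκ₀ hκ₁ t)).ne'

lemma G_hasDerivAt (T : ℝ) : HasDerivAt (G κ) (fI κ T) T := by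
  have hG : G κ = fun T => ∫ t in (0:ℝ)..T, fI κ t := by
    funext T
    exact intervalIntegral.integral_congr fun t _ => integrand_eq hκ₀ hκ₁ t
  rw [hG]
  exact intervalIntegral.integral_hasDerivAt_right
    ((fI_cont hκ₀ hκ₁).intervalIntegrable 0 T)
    ((fI_cont hκ₀ hκ₁).stronglyMeasurableAtFilter volume (𝓝 T))
    (fI_cont hκ₀ hκ₁).continuousAt

lemma G_strictMono : StrictMono (G κ) :=
  strictMono_of_deriv_pos (fun x => by
    rw [(G_hasDerivAt hκ₀ hκ₁ x).deriv]; exact fI_pos hκ₀ hκ₁ x)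

end kappa

lemma cos_arcsin_half {y : ℝ} (hy : |y| < 1) :
    Real.cos (Real.arcsin y / 2)
      = Real.sqrt (1 - y^2) * (1/2 * (1 / Real.sqrt (1-y) + 1 / Real.sqrt (1+y))) := by
  obtain ⟨hy1, hy2⟩ := abs_lt.1 hy
  have h1 : (0:ℝ) < 1 - y := by linarith
  have h2 : (0:ℝ) < 1 + y := by linarith
  set a := Real.sqrt (1-y) with ha
  set b := Real.sqrt (1+y) with hb
  have hapos : 0 < a := Real.sqrt_pos.2 h1
  have hbpos : 0 < b := Real.sqrt_pos.2 h2
  have ha2 : a^2 = 1 - y := Real.sq_sqrt h1.le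
  have hb2 : b^2 = 1 + y := Real.sq_sqrt h2.le
  have hab : Real.sqrt (1 - y^2) = a * b := by
    rw [show 1 - y^2 = (1-y)*(1+y) from by ring, ha, hb, Real.sqrt_mul h1.le]
  have harc : -π ≤ Real.arcsin y ∧ Real.arcsin y ≤ π := by
    have h3 := Real.arcsin_le_pi_div_two y
    have h4 := Real.neg_pi_div_two_le_arcsin y
    constructor <;> nlinarith [Real.pi_pos]
  rw [Real.cos_half harc.1 harc.2, Real.cos_arcsin, hab]
  have key : (1 + a*b)/2 = ((a+b)/2)^2 := by
    have : (a+b)^2 = a^2 + 2*(a*b) + b^2 := by ring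
    rw [show ((a+b)/2)^2 = (a+b)^2/4 from by ring, this, ha2, hb2]
    ring
  rw [key, Real.sqrt_sq (by positivity)]
  field_simp
  ring


theorem stmt9 (κ : ℝ) (hκ₀ : 0 < κ) (hκ₁ : κ < 1)
    (φ : ℝ → ℝ) (hφ₁ : Function.LeftInverse φ (G κ))
    (hφ₂ : Function.RightInverse φ (G κ)) :
    Differentiable ℝ (rn κ φ) ∧
      ∀ u : ℝ, deriv (rn κ φ) u = κ / 2 * Real.cos (φ u) := by
  have hGm := G_strictMono hκ₀ hκ₁
  have hφmono : StrictMono φ := by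
    intro u v huv
    have : G κ (φ u) < G κ (φ v) := by rw [hφ₂ u, hφ₂ v]; exact huv
    exact hGm.lt_iff_lt.1 this
  have hφcont : Continuous φ :=
    hφmono.monotone.continuous_of_surjective hφ₁.surjective
  have hφd : ∀ u, HasDerivAt φ (fI κ (φ u))⁻¹ u := fun u =>
    HasDerivAt.of_local_left_inverse hφcont.continuousAt
      (G_hasDerivAt hκ₀ hκ₁ (φ u)) (fI_pos hκ₀ hκ₁ (φ u)).ne'
      (Filter.Eventually.of_forall hφ₂)
  have key : ∀ u, HasDerivAt (rn κ φ) (κ/2 * Real.cos (φ u)) u := by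
    intro u
    set x := φ u with hx
    set y := κ * Real.sin x with hy
    have hylt : |y| < 1 := abs_y_lt hκ₀ hκ₁ x
    obtain ⟨hy1, hy2⟩ := abs_lt.1 hylt
    set p := (fI κ x)⁻¹ with hp
    have h2 : HasDerivAt (fun v => κ * Real.sin (φ v)) (κ * (Real.cos x * p)) u :=
      ((Real.hasDerivAt_sin x).comp u (hφd u)).const_mul κ
    have h3 : HasDerivAt (fun v => Real.arcsin (κ * Real.sin (φ v)))
        (1 / Real.sqrt (1 - y^2) * (κ * (Real.cos x * p))) u :=
      (Real.hasDerivAt_arcsin (by linarith) (by linarith)).comp u h2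
    have h4 : HasDerivAt (fun v => Real.arcsin (κ * Real.sin (φ v)) / 2)
        (1 / Real.sqrt (1 - y^2) * (κ * (Real.cos x * p)) / 2) u := h3.div_const 2
    have h5 : HasDerivAt (rn κ φ)
        (Real.cos (Real.arcsin y / 2) *
          (1 / Real.sqrt (1 - y^2) * (κ * (Real.cos x * p)) / 2)) u := by
      have := (Real.hasDerivAt_sin (Real.arcsin (κ * Real.sin (φ u)) / 2)).comp u h4
      exact this
    convert h5 using 1
    have hsq : (0:ℝ) < 1 - y^2 := by nlinarith
    have hsqrt : 0 < Real.sqrt (1 - y^2) := Real.sqrt_pos.2 hsq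
    have hfpos : 0 < fI κ x := fI_pos hκ₀ hκ₁ x
    have hfI : fI κ x = 1/2 * (1 / Real.sqrt (1-y) + 1 / Real.sqrt (1+y)) := by
      rw [fI, hy]
    rw [cos_arcsin_half hylt, ← hfI, hp]
    field_simp
  exact ⟨fun u => (key u).differentiableAt, fun u => (key u).deriv⟩
end

section
/- For every modulus κ with 0 < κ < 1, the function y : ℝ → ℝ defined by y(u) = rn(√8·u) satisfies the differential equation (y'(u))² = T₄(y(u)) − (1 − 2κ²) for all real u, where T₄ is the degree-four Chebyshev polynomial of the first kind; equivalently, (y'(u))² = 8·y(u)⁴ − 8·y(u)² + 2κ². -/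
open Real

namespace Stmt17Aux


noncomputable def a (n : ℕ) : ℝ :=
  Polynomial.eval (1/2 : ℝ) (ascPochhammer ℝ n) / (Nat.factorial n : ℝ)

lemma poch_pos {q : ℝ} (hq : 0 < q) (n : ℕ) :
    0 < Polynomial.eval q (ascPochhammer ℝ n) := by
  induction n with
  | zero => simp
  | succ n ih =>
    rw [ascPochhammer_succ_right]
    simp only [Polynomial.eval_mul, Polynomial.eval_add, Polynomial.eval_X,
      Polynomial.eval_natCast]
    positivity

lemma a_pos (n : ℕ) : 0 < a n := by
  unfold a
  have := poch_pos (q := (1/2:ℝ)) (by norm_num) n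
  positivity

lemma a_succ (n : ℕ) : a (n + 1) = a n * ((n + 1/2) / (n + 1)) := by
  unfold a
  rw [ascPochhammer_succ_right, Nat.factorial_succ]
  simp only [Polynomial.eval_mul, Polynomial.eval_add, Polynomial.eval_X,
    Polynomial.eval_natCast, Nat.cast_mul, Nat.cast_add, Nat.cast_one]
  have h1 : ((Nat.factorial n : ℝ)) ≠ 0 := Nat.cast_ne_zero.2 (Nat.factorial_ne_zero n)
  have h2 : ((n:ℝ) + 1) ≠ 0 := by positivity
  field_simp
  ring

lemma a_le_one (n : ℕ) : a n ≤ 1 := by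
  induction n with
  | zero => simp [a]
  | succ n ih =>
    rw [a_succ]
    have h : ((n:ℝ) + 1/2) / (n + 1) ≤ 1 := by
      rw [div_le_one (by positivity)]; linarith
    have := mul_le_one₀ (a := a n) (b := ((n:ℝ) + 1/2) / (n + 1)) ih (by positivity) h
    linarith

lemma summable_of_poly_bound {g : ℕ → ℝ} {x : ℝ} (hx : |x| < 1)
    (hb : ∀ n, ‖g n‖ ≤ (2*n+2) * |x|^n) : Summable g := by
  refine Summable.of_norm_bounded ?_ hb
  have h1 : Summable (fun n : ℕ => (n:ℝ)^1 * |x|^n) :=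
    summable_pow_mul_geometric_of_norm_lt_one 1 (by simpa using hx)
  have h2 : Summable (fun n : ℕ => |x|^n) :=
    summable_geometric_of_lt_one (abs_nonneg x) hx
  have := (h1.mul_left 2).add (h2.mul_left 2)
  refine this.congr fun n => ?_
  ring_nf

noncomputable def f (x : ℝ) : ℝ := ∑' n : ℕ, a n * x ^ n

lemma abs_term_le {x : ℝ} (n : ℕ) : ‖a n * x ^ n‖ ≤ |x| ^ n := by
  rw [norm_mul, norm_pow]
  calc ‖a n‖ * ‖x‖ ^ n ≤ 1 * ‖x‖^n := by
        apply mul_le_mul_of_nonneg_right _ (by positivity)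
        rw [Real.norm_eq_abs, abs_of_pos (a_pos n)]; exact a_le_one n
    _ = |x| ^ n := by rw [one_mul, Real.norm_eq_abs]

lemma summable_f {x : ℝ} (hx : |x| < 1) : Summable fun n : ℕ => a n * x ^ n :=
  summable_of_poly_bound hx fun n => (abs_term_le n).trans <| by
    have h1 : (1:ℝ) ≤ 2*n+2 := by linarith [Nat.cast_nonneg (α := ℝ) n]
    nlinarith [pow_nonneg (abs_nonneg x) n]


lemma a_zero : a 0 = 1 := by simp [a]
lemma summable_deriv_bound {r : ℝ} (hr : |r| < 1) :
    Summable (fun n : ℕ => (n:ℝ) * |r| ^ (n-1)) := by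
  rw [← summable_nat_add_iff 1]
  have h1 : Summable (fun n : ℕ => (n:ℝ)^1 * |r|^n) :=
    summable_pow_mul_geometric_of_norm_lt_one 1 (by simpa using hr)
  have h2 : Summable (fun n : ℕ => |r|^n) :=
    summable_geometric_of_lt_one (abs_nonneg r) hr
  refine (h1.add h2).congr fun n => ?_
  simp
  ring

lemma f_hasDerivAt {r x : ℝ} (hr : 0 < r) (hr1 : r < 1) (hx : x ∈ Set.Ioo (-r) r) :
    HasDerivAt f (∑' n : ℕ, a n * ((n:ℝ) * x ^ (n-1))) x := by
  refine hasDerivAt_tsum_of_isPreconnected (u := fun n : ℕ => (n:ℝ) * r ^ (n-1))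
    (by simpa [abs_of_pos hr] using summable_deriv_bound (r := r) (by rwa [abs_of_pos hr]))
    isOpen_Ioo (convex_Ioo _ _).isPreconnected
    (fun n y _ => (hasDerivAt_pow n y).const_mul (a n))
    (fun n y hy => ?_) (Set.mem_Ioo.2 ⟨by linarith, hr⟩)
    ((summable_f (by simpa using hr1)).congr fun n => rfl) hx
  · rw [Real.norm_eq_abs, abs_mul, abs_mul, abs_pow]
    have hy' : |y| ≤ r := by
      rw [abs_le]; exact ⟨hy.1.le, hy.2.le⟩
    have h1 : |a n| ≤ 1 := by rw [abs_of_pos (a_pos n)]; exact a_le_one n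
    have h2 : |y| ^ (n-1) ≤ r ^ (n-1) := pow_le_pow_left₀ (abs_nonneg y) hy' _
    have h3 : |(n:ℝ)| = (n:ℝ) := abs_of_nonneg (Nat.cast_nonneg n)
    rw [h3]
    calc |a n| * ((n:ℝ) * |y|^(n-1)) ≤ 1 * ((n:ℝ) * r^(n-1)) := by
          apply mul_le_mul h1 _ (by positivity) (by norm_num)
          exact mul_le_mul_of_nonneg_left h2 (Nat.cast_nonneg n)
      _ = (n:ℝ) * r^(n-1) := one_mul _
lemma key_coeff (n : ℕ) : 2 * ((n:ℝ)+1) * a (n+1) = (2*n+1) * a n := by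
  rw [a_succ]
  have h : ((n:ℝ) + 1) ≠ 0 := by positivity
  field_simp

lemma deriv_sum_eq {x : ℝ} (hx : |x| < 1) :
    2 * (1 - x) * (∑' n : ℕ, a n * ((n:ℝ) * x ^ (n-1))) = f x := by
  have hxabs : ∀ n : ℕ, |x|^n ≤ 1 := fun n => pow_le_one₀ (abs_nonneg x) hx.le
  have habs : ∀ n : ℕ, |a n| ≤ 1 := fun n => by
    rw [abs_of_pos (a_pos n)]; exact a_le_one n
  have hD : Summable (fun n : ℕ => a n * ((n:ℝ) * x ^ (n-1))) := by
    refine Summable.of_norm_bounded ((summable_deriv_bound hx).mul_left 1) fun n => ?_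
    rw [one_mul, Real.norm_eq_abs, abs_mul, abs_mul, abs_pow,
      abs_of_nonneg (Nat.cast_nonneg (α := ℝ) n)]
    exact mul_le_of_le_one_left (by positivity) (habs n)
  have hsB : Summable (fun n : ℕ => a (n+1) * (((n:ℝ)+1) * x ^ n)) := by
    refine ((summable_nat_add_iff 1).2 hD).congr fun n => ?_
    push_cast; simp
  have hshift : (∑' n : ℕ, a n * ((n:ℝ) * x ^ (n-1)))
      = ∑' n : ℕ, a (n+1) * (((n:ℝ)+1) * x ^ n) := by
    rw [hD.tsum_eq_zero_add]
    push_cast; simp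
  have hsP : Summable (fun n : ℕ => 2*((n:ℝ)+1) * a (n+1) * x ^ n) := by
    refine summable_of_poly_bound hx fun n => ?_
    rw [Real.norm_eq_abs, abs_mul, abs_mul, abs_pow]
    have he : |2*((n:ℝ)+1)| = 2*((n:ℝ)+1) := abs_of_pos (by positivity)
    rw [he]
    have h := mul_le_mul_of_nonneg_right
      (mul_le_mul_of_nonneg_left (habs (n+1)) (show (0:ℝ) ≤ 2*((n:ℝ)+1) by positivity))
      (pow_nonneg (abs_nonneg x) n)
    nlinarith [pow_nonneg (abs_nonneg x) n, Nat.cast_nonneg (α := ℝ) n]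
  have hsR : Summable (fun n : ℕ => 2*(n:ℝ) * a n * x ^ n) := by
    refine summable_of_poly_bound hx fun n => ?_
    rw [Real.norm_eq_abs, abs_mul, abs_mul, abs_pow]
    have he : |2*(n:ℝ)| = 2*(n:ℝ) := abs_of_nonneg (by positivity)
    rw [he]
    have h := mul_le_mul_of_nonneg_right
      (mul_le_mul_of_nonneg_left (habs n) (show (0:ℝ) ≤ 2*(n:ℝ) by positivity))
      (pow_nonneg (abs_nonneg x) n)
    nlinarith [pow_nonneg (abs_nonneg x) n, Nat.cast_nonneg (α := ℝ) n]
  have hsQ : Summable (fun n : ℕ => 2*((n:ℝ)+1) * a (n+1) * x ^ (n+1)) := by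
    refine (hsP.mul_right x).congr fun n => ?_
    rw [pow_succ]; ring
  have hQ : (∑' n : ℕ, 2*((n:ℝ)+1) * a (n+1) * x ^ (n+1))
      = ∑' n : ℕ, 2*(n:ℝ) * a n * x ^ n := by
    rw [hsR.tsum_eq_zero_add]
    push_cast; simp
  rw [hshift, ← tsum_mul_left]
  have hterm : ∀ n : ℕ, 2 * (1-x) * (a (n+1) * (((n:ℝ)+1) * x ^ n))
      = 2*((n:ℝ)+1) * a (n+1) * x ^ n - 2*((n:ℝ)+1) * a (n+1) * x ^ (n+1) := by
    intro n; rw [pow_succ]; ring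
  rw [tsum_congr hterm, hsP.tsum_sub hsQ, hQ, ← hsP.tsum_sub hsR]
  unfold f
  refine tsum_congr fun n => ?_
  linear_combination (x^n) * key_coeff n

lemma f_eq {x : ℝ} (hx : |x| < 1) : f x = 1 / Real.sqrt (1 - x) := by
  set r : ℝ := (1 + |x|)/2 with hr_def
  have hxr : |x| < r := by rw [hr_def]; linarith
  have hr0 : 0 < r := lt_of_le_of_lt (abs_nonneg x) hxr
  have hr1 : r < 1 := by rw [hr_def]; linarith
  set F : ℝ → ℝ := fun z => f z * Real.sqrt (1 - z) with hF_def
  have hF' : ∀ z ∈ Set.Ioo (-r) r, HasDerivAt F 0 z := by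
    intro z hz
    have hzabs : |z| < 1 := by
      rw [abs_lt]; exact ⟨by linarith [hz.1], by linarith [hz.2]⟩
    have hz1 : (0:ℝ) < 1 - z := by rw [abs_lt] at hzabs; linarith [hzabs.2]
    have hd := f_hasDerivAt hr0 hr1 hz
    have hlin : HasDerivAt (fun z : ℝ => 1 - z) (-1) z := by
      simpa using (hasDerivAt_id z).const_sub 1
    have hs : HasDerivAt (fun z : ℝ => Real.sqrt (1 - z)) (1/(2*Real.sqrt (1-z)) * (-1)) z :=
      (Real.hasDerivAt_sqrt (ne_of_gt hz1)).comp z hlin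
    have hmul := hd.mul hs
    refine HasDerivAt.congr_deriv (f := F) hmul ?_
    have hode := deriv_sum_eq hzabs
    set D := ∑' n : ℕ, a n * ((n:ℝ) * z ^ (n-1))
    set s := Real.sqrt (1-z) with hs_def
    have hs2 : s * s = 1 - z := Real.mul_self_sqrt hz1.le
    have hspos : 0 < s := Real.sqrt_pos.2 hz1
    have hsne : s ≠ 0 := ne_of_gt hspos
    rw [← hode, ← hs2]
    field_simp
    ring
  have hcont : ∀ z ∈ Set.Ioo (-r) r, ContinuousAt F z := fun z hz => (hF' z hz).continuousAt
  have hconst : F x = F 0 := by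
    rcases le_total 0 x with h | h
    · have hss : Set.Icc 0 x ⊆ Set.Ioo (-r) r := by
        intro z hz
        constructor
        · linarith [hz.1]
        · have : x < r := lt_of_abs_lt hxr
          linarith [hz.2]
      exact constant_of_has_deriv_right_zero
        (fun z hz => (hcont z (hss hz)).continuousWithinAt)
        (fun z hz => ((hF' z (hss (Set.mem_Icc.2 ⟨hz.1, hz.2.le⟩))).hasDerivWithinAt))
        x (Set.mem_Icc.2 ⟨h, le_refl x⟩)
    · have hss : Set.Icc x 0 ⊆ Set.Ioo (-r) r := by
        intro z hz
        have : -r < x := neg_lt_of_abs_lt hxr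
        exact ⟨by linarith [hz.1], by linarith [hz.2]⟩
      have := constant_of_has_deriv_right_zero
        (f := F) (a := x) (b := 0)
        (fun z hz => (hcont z (hss hz)).continuousWithinAt)
        (fun z hz => ((hF' z (hss (Set.mem_Icc.2 ⟨hz.1, hz.2.le⟩))).hasDerivWithinAt))
        0 (Set.mem_Icc.2 ⟨h, le_refl 0⟩)
      -- this : F 0 = F x
      rw [this]
  have hf0 : f 0 = 1 := by
    unfold f
    rw [tsum_eq_single 0 (fun n hn => by simp [zero_pow hn])]
    simpa using a_zero
  have hF0 : F 0 = 1 := by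
    rw [hF_def]; simp [hf0]
  have h1x : (0:ℝ) < 1 - x := by rw [abs_lt] at hx; linarith [hx.2]
  have hspos : 0 < Real.sqrt (1-x) := Real.sqrt_pos.2 h1x
  have hfx : f x * Real.sqrt (1-x) = 1 := by
    have h := hconst
    simp only [hF_def] at h
    rw [h, hf0]
    simp
  rw [eq_div_iff (ne_of_gt hspos)]
  exact hfx
lemma coeff_eq (m : ℕ) :
    Polynomial.eval (1/4:ℝ) (ascPochhammer ℝ m) * Polynomial.eval (3/4:ℝ) (ascPochhammer ℝ m)
      = a (2*m) * (Polynomial.eval (1/2:ℝ) (ascPochhammer ℝ m) * (Nat.factorial m : ℝ)) := by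
  induction m with
  | zero => simp [a_zero]
  | succ m ih =>
    have key2 : a (2*m+1+1) * (((m:ℝ)+1/2)*((m:ℝ)+1)) = a (2*m) * (((m:ℝ)+1/4)*((m:ℝ)+3/4)) := by
      rw [a_succ (2*m+1), a_succ (2*m)]
      push_cast
      have h1 : (2*(m:ℝ)+1) ≠ 0 := by positivity
      have h2 : (2*(m:ℝ)+1+1) ≠ 0 := by positivity
      field_simp
      ring
    have hrw : 2*(m+1) = 2*m+1+1 := by ring
    rw [hrw, ascPochhammer_succ_right, Nat.factorial_succ]
    simp only [Polynomial.eval_mul, Polynomial.eval_add, Polynomial.eval_X,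
      Polynomial.eval_natCast]
    push_cast
    linear_combination ((1/4+(m:ℝ))*(3/4+(m:ℝ))) * ih -
      (Polynomial.eval (1/2:ℝ) (ascPochhammer ℝ m) * (Nat.factorial m : ℝ)) * key2

lemma hyper_eq {z : ℝ} (hz : |z| < 1) :
    hyperF (1/4) (3/4) (1/2) (z^2) = (1/Real.sqrt (1-z) + 1/Real.sqrt (1+z))/2 := by
  have hzn : |(-z)| < 1 := by rwa [abs_neg]
  have h1 : hyperF (1/4) (3/4) (1/2) (z^2) = ∑' m : ℕ, a (2*m) * z^(2*m) := by
    unfold hyperF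
    refine tsum_congr fun m => ?_
    have hne : Polynomial.eval (1/2:ℝ) (ascPochhammer ℝ m) * (Nat.factorial m : ℝ) ≠ 0 := by
      have := poch_pos (q := (1/2:ℝ)) (by norm_num) m
      have := Nat.cast_pos (α := ℝ) |>.2 (Nat.factorial_pos m)
      positivity
    rw [coeff_eq, mul_div_assoc, div_self hne, mul_one, ← pow_mul]
  have h2 : Summable fun n : ℕ => a n * z ^ n := summable_f hz
  have h3 : Summable fun n : ℕ => a n * (-z) ^ n := summable_f hzn
  have hinj : Function.Injective (fun m : ℕ => 2*m) := fun x y h => by simpa using h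
  have hsupp : Function.support (fun n : ℕ => a n * z^n + a n * (-z)^n)
      ⊆ Set.range (fun m : ℕ => 2*m) := by
    intro n hn
    rcases Nat.even_or_odd n with he | ho
    · obtain ⟨k, hk⟩ := he
      exact ⟨k, by simp; omega⟩
    · exfalso
      apply hn
      simp only [ho.neg_pow]
      ring
  have heven : (∑' m : ℕ, (a (2*m) * z^(2*m) + a (2*m) * (-z)^(2*m)))
      = ∑' n : ℕ, (a n * z^n + a n * (-z)^n) := hinj.tsum_eq hsupp
  have hterm : ∀ m : ℕ, a (2*m) * z^(2*m) + a (2*m) * (-z)^(2*m)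
      = 2 * (a (2*m) * z^(2*m)) := by
    intro m
    rw [(even_two_mul m).neg_pow]
    ring
  have hsum : 2 * ∑' m : ℕ, a (2*m) * z^(2*m) = f z + f (-z) := by
    rw [← tsum_mul_left, ← tsum_congr hterm, heven]
    exact h2.tsum_add h3
  rw [h1]
  have := f_eq hz
  have h4 := f_eq hzn
  rw [sub_neg_eq_add] at h4
  linarith [hsum, this, h4]
noncomputable def qa (κ t : ℝ) : ℝ :=
  (1/Real.sqrt (1-κ*Real.sin t) + 1/Real.sqrt (1+κ*Real.sin t))/2

lemma cheb_eval (x : ℝ) :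
    Polynomial.eval x (Polynomial.Chebyshev.T ℝ 4) = 8*x^4 - 8*x^2 + 1 := by
  have h3 : Polynomial.Chebyshev.T ℝ 3
      = 2 * Polynomial.X * Polynomial.Chebyshev.T ℝ 2 - Polynomial.Chebyshev.T ℝ 1 := by
    simpa using Polynomial.Chebyshev.T_add_two ℝ 1
  have h4 : Polynomial.Chebyshev.T ℝ 4
      = 2 * Polynomial.X * Polynomial.Chebyshev.T ℝ 3 - Polynomial.Chebyshev.T ℝ 2 := by
    simpa using Polynomial.Chebyshev.T_add_two ℝ 2
  rw [h4, h3, Polynomial.Chebyshev.T_two, Polynomial.Chebyshev.T_one]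
  simp only [Polynomial.eval_sub, Polynomial.eval_mul, Polynomial.eval_add,
    Polynomial.eval_ofNat, Polynomial.eval_pow, Polynomial.eval_X, Polynomial.eval_one]
  ring

section
variable {κ : ℝ} (hκ₀ : 0 < κ) (hκ₁ : κ < 1)

lemma abs_z_lt (t : ℝ) (hκ₀ : 0 < κ) (hκ₁ : κ < 1) : |κ * Real.sin t| < 1 := by
  rw [abs_mul, abs_of_pos hκ₀]
  calc κ * |Real.sin t| ≤ κ * 1 :=
        mul_le_mul_of_nonneg_left (Real.abs_sin_le_one t) hκ₀.le
    _ < 1 := by linarith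

lemma one_sub_pos (t : ℝ) (hκ₀ : 0 < κ) (hκ₁ : κ < 1) : 0 < 1 - κ * Real.sin t := by
  have := abs_z_lt t hκ₀ hκ₁
  rw [abs_lt] at this
  linarith [this.2]

lemma one_add_pos (t : ℝ) (hκ₀ : 0 < κ) (hκ₁ : κ < 1) : 0 < 1 + κ * Real.sin t := by
  have := abs_z_lt t hκ₀ hκ₁
  rw [abs_lt] at this
  linarith [this.1]

lemma qa_pos (t : ℝ) (hκ₀ : 0 < κ) (hκ₁ : κ < 1) : 0 < qa κ t := by
  unfold qa
  have h1 := one_sub_pos t hκ₀ hκ₁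
  have h2 := one_add_pos t hκ₀ hκ₁
  have := Real.sqrt_pos.2 h1
  have := Real.sqrt_pos.2 h2
  positivity

lemma qa_cont (hκ₀ : 0 < κ) (hκ₁ : κ < 1) : Continuous (qa κ) := by
  unfold qa
  have c1 : Continuous fun t => Real.sqrt (1 - κ * Real.sin t) :=
    (continuous_const.sub (continuous_const.mul Real.continuous_sin)).sqrt
  have c2 : Continuous fun t => Real.sqrt (1 + κ * Real.sin t) :=
    (continuous_const.add (continuous_const.mul Real.continuous_sin)).sqrt
  apply Continuous.div_const
  apply Continuous.add
  · exact continuous_const.div c1 fun t => ne_of_gt (Real.sqrt_pos.2 (one_sub_pos t hκ₀ hκ₁))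
  · exact continuous_const.div c2 fun t => ne_of_gt (Real.sqrt_pos.2 (one_add_pos t hκ₀ hκ₁))

lemma G_eq (hκ₀ : 0 < κ) (hκ₁ : κ < 1) (T : ℝ) : G κ T = ∫ t in (0:ℝ)..T, qa κ t := by
  unfold G
  refine intervalIntegral.integral_congr fun t _ => ?_
  have h : κ^2 * Real.sin t^2 = (κ * Real.sin t)^2 := by ring
  rw [h, hyper_eq (abs_z_lt t hκ₀ hκ₁)]
  rfl

lemma G_hasDerivAt (hκ₀ : 0 < κ) (hκ₁ : κ < 1) (T : ℝ) :
    HasDerivAt (G κ) (qa κ T) T := by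
  have heq : G κ = fun T => ∫ t in (0:ℝ)..T, qa κ t := funext (G_eq hκ₀ hκ₁)
  rw [heq]
  exact intervalIntegral.integral_hasDerivAt_right
    ((qa_cont hκ₀ hκ₁).intervalIntegrable 0 T)
    ((qa_cont hκ₀ hκ₁).stronglyMeasurableAtFilter _ _)
    (qa_cont hκ₀ hκ₁).continuousAt

lemma G_strictMono (hκ₀ : 0 < κ) (hκ₁ : κ < 1) : StrictMono (G κ) := by
  intro x y hxy
  have h := intervalIntegral.intervalIntegral_pos_of_pos (f := qa κ)
    ((qa_cont hκ₀ hκ₁).intervalIntegrable x y) (fun t => qa_pos t hκ₀ hκ₁) hxy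
  have hsub : G κ y - G κ x = ∫ t in x..y, qa κ t := by
    rw [G_eq hκ₀ hκ₁, G_eq hκ₀ hκ₁]
    rw [intervalIntegral.integral_interval_sub_left
      ((qa_cont hκ₀ hκ₁).intervalIntegrable 0 y)
      ((qa_cont hκ₀ hκ₁).intervalIntegrable 0 x)]
  linarith [hsub, h]

end
end Stmt17Aux

theorem stmt17 (κ : ℝ) (hκ₀ : 0 < κ) (hκ₁ : κ < 1)
    (φ : ℝ → ℝ) (hφ₁ : Function.LeftInverse φ (G κ))
    (hφ₂ : Function.RightInverse φ (G κ)) :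
    ∀ u : ℝ,
      (deriv (fun v : ℝ => rn κ φ (Real.sqrt 8 * v)) u) ^ 2 =
        Polynomial.eval (rn κ φ (Real.sqrt 8 * u)) (Polynomial.Chebyshev.T ℝ 4)
          - (1 - 2 * κ ^ 2) ∧
      (deriv (fun v : ℝ => rn κ φ (Real.sqrt 8 * v)) u) ^ 2 =
        8 * (rn κ φ (Real.sqrt 8 * u)) ^ 4 - 8 * (rn κ φ (Real.sqrt 8 * u)) ^ 2
          + 2 * κ ^ 2 := by
  intro u
  -- continuity of φ
  have hGmono := Stmt17Aux.G_strictMono hκ₀ hκ₁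
  have hGsurj : Function.Surjective (G κ) := fun y => ⟨φ y, hφ₂ y⟩
  let E : ℝ ≃o ℝ := StrictMono.orderIsoOfSurjective (G κ) hGmono hGsurj
  have hφE : φ = ⇑E.symm := by
    funext y
    apply E.injective
    rw [E.apply_symm_apply]
    exact hφ₂ y
  have hφcont : Continuous φ := by rw [hφE]; exact OrderIso.continuous E.symm
  -- derivative of φ
  have hφ' : ∀ v : ℝ, HasDerivAt φ (Stmt17Aux.qa κ (φ v))⁻¹ v := fun v =>
    HasDerivAt.of_local_left_inverse hφcont.continuousAt
      (Stmt17Aux.G_hasDerivAt hκ₀ hκ₁ (φ v))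
      (ne_of_gt (Stmt17Aux.qa_pos (φ v) hκ₀ hκ₁))
      (Filter.Eventually.of_forall hφ₂)
  -- chain rule at w = √8 * u
  set w : ℝ := Real.sqrt 8 * u with hw_def
  set z : ℝ := κ * Real.sin (φ w) with hz_def
  have hzabs : |z| < 1 := Stmt17Aux.abs_z_lt (φ w) hκ₀ hκ₁
  have hz1 : z ≠ 1 := by rw [abs_lt] at hzabs; linarith [hzabs.2]
  have hz2 : z ≠ -1 := by rw [abs_lt] at hzabs; linarith [hzabs.1]
  have hsinφ : HasDerivAt (fun t => Real.sin (φ t))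
      (Real.cos (φ w) * (Stmt17Aux.qa κ (φ w))⁻¹) w :=
    (Real.hasDerivAt_sin (φ w)).comp w (hφ' w)
  have hA : HasDerivAt (fun t => κ * Real.sin (φ t))
      (κ * (Real.cos (φ w) * (Stmt17Aux.qa κ (φ w))⁻¹)) w := hsinφ.const_mul κ
  have hB : HasDerivAt (fun t => Real.arcsin (κ * Real.sin (φ t)))
      (1 / Real.sqrt (1 - z^2) * (κ * (Real.cos (φ w) * (Stmt17Aux.qa κ (φ w))⁻¹))) w :=
    by have := (Real.hasDerivAt_arcsin hz2 hz1).comp w hA; exact this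
  have hC := hB.div_const 2
  have hD : HasDerivAt (fun t => Real.sin (Real.arcsin (κ * Real.sin (φ t)) / 2))
      (Real.cos (Real.arcsin z / 2) *
        (1 / Real.sqrt (1 - z^2) * (κ * (Real.cos (φ w) * (Stmt17Aux.qa κ (φ w))⁻¹)) / 2)) w :=
    by have := (Real.hasDerivAt_sin (Real.arcsin (κ * Real.sin (φ w)) / 2)).comp w hC; exact this
  have hlin : HasDerivAt (fun v : ℝ => Real.sqrt 8 * v) (Real.sqrt 8) u := by
    simpa using (hasDerivAt_id u).const_mul (Real.sqrt 8)
  have hE2 : HasDerivAt (fun v : ℝ => Real.sin (Real.arcsin (κ * Real.sin (φ (Real.sqrt 8 * v))) / 2))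
      (Real.cos (Real.arcsin z / 2) *
        (1 / Real.sqrt (1 - z^2) * (κ * (Real.cos (φ w) * (Stmt17Aux.qa κ (φ w))⁻¹)) / 2)
        * Real.sqrt 8) u := hD.comp u hlin
  have hfun : (fun v : ℝ => rn κ φ (Real.sqrt 8 * v))
      = fun v : ℝ => Real.sin (Real.arcsin (κ * Real.sin (φ (Real.sqrt 8 * v))) / 2) := rfl
  have hderiv : deriv (fun v : ℝ => rn κ φ (Real.sqrt 8 * v)) u
      = Real.cos (Real.arcsin z / 2) *
        (1 / Real.sqrt (1 - z^2) * (κ * (Real.cos (φ w) * (Stmt17Aux.qa κ (φ w))⁻¹)) / 2)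
        * Real.sqrt 8 := by
    rw [hfun]
    exact hE2.deriv
  -- algebra
  set s1 : ℝ := Real.sqrt (1 - z) with hs1_def
  set s2 : ℝ := Real.sqrt (1 + z) with hs2_def
  have hz1' : (0:ℝ) < 1 - z := Stmt17Aux.one_sub_pos (φ w) hκ₀ hκ₁
  have hz2' : (0:ℝ) < 1 + z := Stmt17Aux.one_add_pos (φ w) hκ₀ hκ₁
  have hs1 : 0 < s1 := Real.sqrt_pos.2 hz1'
  have hs2 : 0 < s2 := Real.sqrt_pos.2 hz2'
  have hs1sq : s1^2 = 1 - z := Real.sq_sqrt hz1'.le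
  have hs2sq : s2^2 = 1 + z := Real.sq_sqrt hz2'.le
  set c : ℝ := Real.sqrt (1 - z^2) with hc_def
  have hzsq : (0:ℝ) < 1 - z^2 := by nlinarith [hz1', hz2']
  have hcpos : 0 < c := Real.sqrt_pos.2 hzsq
  have hcsq : c^2 = 1 - z^2 := Real.sq_sqrt hzsq.le
  have hc : c = s1 * s2 := by
    rw [hc_def, hs1_def, hs2_def, ← Real.sqrt_mul hz1'.le]
    congr 1
    ring
  have hqa : Stmt17Aux.qa κ (φ w) = (1/s1 + 1/s2)/2 := rfl
  have hcs : Real.cos (Real.arcsin z / 2)^2 = 1/2 + c/2 := by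
    rw [Real.cos_sq, show 2*(Real.arcsin z / 2) = Real.arcsin z by ring, Real.cos_arcsin]
  have hsn : rn κ φ w ^ 2 = 1/2 - c/2 := by
    show Real.sin (psi κ φ w / 2) ^ 2 = 1/2 - c/2
    rw [Real.sin_sq]
    have : psi κ φ w = Real.arcsin z := rfl
    rw [this, hcs]
    ring
  have hcp : Real.cos (φ w) ^ 2 = 1 - Real.sin (φ w)^2 := by
    rw [Real.cos_sq']
  have hz_eq : z = κ * Real.sin (φ w) := hz_def
  have hc2 : c^2 = 1 - (κ * Real.sin (φ w))^2 := by rw [hcsq, hz_eq]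
  have h8 : Real.sqrt 8 ^ 2 = 8 := Real.sq_sqrt (by norm_num)
  clear_value w z s1 s2 c
  have hqainv : (Stmt17Aux.qa κ (φ w))⁻¹ = 2*c/(s1+s2) := by
    rw [hqa, hc]
    apply inv_eq_of_mul_eq_one_left
    field_simp
    ring
  -- main identity (second form)
  have hmain : (deriv (fun v : ℝ => rn κ φ (Real.sqrt 8 * v)) u) ^ 2 =
      8 * (rn κ φ w) ^ 4 - 8 * (rn κ φ w) ^ 2 + 2 * κ ^ 2 := by
    rw [hderiv, hqainv]
    have hssum : 0 < s1 + s2 := by linarith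
    have hssq : (s1+s2)^2 = 2 + 2*c := by
      have : (s1+s2)^2 = s1^2 + 2*(s1*s2) + s2^2 := by ring
      rw [this, hs1sq, hs2sq, ← hc]
      ring
    have hcne : c ≠ 0 := ne_of_gt hcpos
    have hsne : (s1 + s2) ≠ 0 := ne_of_gt hssum
    have hstep : (Real.cos (Real.arcsin z / 2) *
        (1 / c * (κ * (Real.cos (φ w) * (2*c/(s1+s2)))) / 2)
        * Real.sqrt 8)^2
        = 8 * (Real.cos (Real.arcsin z / 2)^2 * (κ^2 * Real.cos (φ w)^2) / ((s1+s2)^2)) := by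
      rw [mul_pow, h8]
      field_simp
    rw [hstep, hcs, hssq]
    have h2c : (2:ℝ) + 2*c ≠ 0 := by positivity
    have hfin : 8 * ((1/2 + c/2) * (κ^2 * Real.cos (φ w)^2) / (2 + 2*c))
        = 2 * κ^2 * Real.cos (φ w)^2 := by
      field_simp
      ring
    rw [hfin]
    linear_combination 2*κ^2*hcp + (-4*(2*(rn κ φ w)^2 - 1 - c))*hsn + (-2)*hc2
  refine ⟨?_, hmain⟩
  rw [Stmt17Aux.cheb_eval]
  linarith [hmain]
end

section
/- For every modulus κ with 0 < κ < 1 and every real u, cos(φ(u + 2K)) = −cos(φ(u)) and cos(ψ(u + 2K)) = cos(ψ(u)); consequently the function cn₂ = cos ∘ φ : ℝ → ℝ has period 4K while the function dn₂ = cos ∘ ψ : ℝ → ℝ has period 2K. -/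
open Real

noncomputable def coefF (n : ℕ) : ℝ :=
  Polynomial.eval (1/4 : ℝ) (ascPochhammer ℝ n) * Polynomial.eval (3/4 : ℝ) (ascPochhammer ℝ n) /
      (Polynomial.eval (1/2 : ℝ) (ascPochhammer ℝ n) * (Nat.factorial n : ℝ))

lemma coefF_pos (n : ℕ) : 0 < coefF n := by
  have h1 := ascPochhammer_pos n (1/4 : ℝ) (by norm_num)
  have h2 := ascPochhammer_pos n (3/4 : ℝ) (by norm_num)
  have h3 := ascPochhammer_pos n (1/2 : ℝ) (by norm_num)
  have h4 : (0:ℝ) < (Nat.factorial n : ℝ) := by exact_mod_cast n.factorial_pos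
  exact div_pos (mul_pos h1 h2) (mul_pos h3 h4)

lemma coefF_le_one (n : ℕ) : coefF n ≤ 1 := by
  induction n with
  | zero => simp [coefF]
  | succ n ih =>
    have h3 := ascPochhammer_pos n (1/2 : ℝ) (by norm_num)
    have h4 : (0:ℝ) < (Nat.factorial n : ℝ) := by exact_mod_cast n.factorial_pos
    have hn2 : (0:ℝ) < (n:ℝ) + 1 := by positivity
    have hd : (0:ℝ) < (1/2 : ℝ) + n := by positivity
    have key : coefF (n+1)
        = coefF n * (((1/4:ℝ) + n) * ((3/4:ℝ) + n) / (((1/2:ℝ) + n) * ((n:ℝ) + 1))) := by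
      unfold coefF
      rw [ascPochhammer_succ_eval, ascPochhammer_succ_eval, ascPochhammer_succ_eval,
        Nat.factorial_succ]
      push_cast
      field_simp
    have hratio : ((1/4:ℝ) + n) * ((3/4:ℝ) + n) / (((1/2:ℝ) + n) * ((n:ℝ) + 1)) ≤ 1 := by
      rw [div_le_one (by positivity)]
      have : (0:ℝ) ≤ (n:ℝ) := n.cast_nonneg
      nlinarith
    calc coefF (n+1) ≤ coefF n * 1 := by
          rw [key]
          exact mul_le_mul_of_nonneg_left hratio (coefF_pos n).le
      _ = coefF n := mul_one _
      _ ≤ 1 := ih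

lemma cont_integrand (κ : ℝ) (hκ₁ : κ < 1) (hκ₀ : 0 < κ) :
    Continuous (fun t : ℝ => hyperF (1/4) (3/4) (1/2) (κ ^ 2 * Real.sin t ^ 2)) := by
  have hκ2 : κ ^ 2 < 1 := by nlinarith
  have : (fun t : ℝ => hyperF (1/4) (3/4) (1/2) (κ ^ 2 * Real.sin t ^ 2))
      = fun t => ∑' n : ℕ, coefF n * (κ ^ 2 * Real.sin t ^ 2) ^ n := rfl
  rw [this]
  apply continuous_tsum (u := fun n => (κ ^ 2) ^ n)
  · intro i
    fun_prop
  · exact summable_geometric_of_lt_one (by positivity) hκ2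
  · intro n t
    have hx0 : (0:ℝ) ≤ κ ^ 2 * Real.sin t ^ 2 := by positivity
    have hx1 : κ ^ 2 * Real.sin t ^ 2 ≤ κ ^ 2 := by
      nlinarith [Real.sin_sq_le_one t, sq_nonneg κ]
    have h1 : |coefF n * (κ ^ 2 * Real.sin t ^ 2) ^ n|
        = coefF n * (κ ^ 2 * Real.sin t ^ 2) ^ n := by
      exact abs_of_nonneg (mul_nonneg (coefF_pos n).le (pow_nonneg hx0 n))
    rw [Real.norm_eq_abs, h1]
    calc coefF n * (κ ^ 2 * Real.sin t ^ 2) ^ n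
        ≤ 1 * (κ ^ 2) ^ n :=
          mul_le_mul (coefF_le_one n) (pow_le_pow_left₀ hx0 hx1 n) (by positivity) one_pos.le
      _ = (κ ^ 2) ^ n := one_mul _

lemma G_add_pi (κ : ℝ) (hκ₀ : 0 < κ) (hκ₁ : κ < 1) (T : ℝ) :
    G κ (T + Real.pi) = G κ T + 2 * K κ := by
  set f : ℝ → ℝ := fun t => hyperF (1/4) (3/4) (1/2) (κ ^ 2 * Real.sin t ^ 2) with hf
  have hcont : Continuous f := cont_integrand κ hκ₁ hκ₀
  have hper : Function.Periodic f Real.pi := by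
    intro t
    simp only [hf]
    rw [Real.sin_add_pi]
    ring_nf
  have hint : ∀ a b : ℝ, IntervalIntegrable f MeasureTheory.volume a b :=
    fun a b => hcont.intervalIntegrable a b
  have hsplit : G κ (T + Real.pi) = G κ T + ∫ t in T..(T + Real.pi), f t := by
    rw [G, G, ← intervalIntegral.integral_add_adjacent_intervals (hint 0 T) (hint T (T + Real.pi))]
  have hshift : (∫ t in T..(T + Real.pi), f t) = ∫ t in (0:ℝ)..Real.pi, f t := by
    have := hper.intervalIntegral_add_eq T 0
    simpa using this
  have hrefl : (∫ t in (Real.pi/2)..Real.pi, f t) = ∫ t in (0:ℝ)..(Real.pi/2), f t := by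
    have h1 : (∫ x in (0:ℝ)..(Real.pi/2), f (Real.pi - x))
        = ∫ x in (Real.pi - Real.pi/2)..(Real.pi - 0), f x :=
      intervalIntegral.integral_comp_sub_left f Real.pi
    have h2 : ∀ x : ℝ, f (Real.pi - x) = f x := by
      intro x
      simp only [hf]
      rw [Real.sin_pi_sub]
    simp only [h2] at h1
    rw [h1]
    norm_num
    congr 1
    ring
  have hfull : (∫ t in (0:ℝ)..Real.pi, f t) = 2 * K κ := by
    rw [← intervalIntegral.integral_add_adjacent_intervals (hint 0 (Real.pi/2))
      (hint (Real.pi/2) Real.pi), hrefl, K, G]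
    ring
  rw [hsplit, hshift, hfull]

theorem stmt19 (κ : ℝ) (hκ₀ : 0 < κ) (hκ₁ : κ < 1)
    (φ : ℝ → ℝ) (hφ₁ : Function.LeftInverse φ (G κ))
    (hφ₂ : Function.RightInverse φ (G κ)) :
    (∀ u : ℝ, Real.cos (φ (u + 2 * K κ)) = - Real.cos (φ u)) ∧
      (∀ u : ℝ, Real.cos (psi κ φ (u + 2 * K κ)) = Real.cos (psi κ φ u)) ∧
      Function.Periodic (Real.cos ∘ φ) (4 * K κ) ∧
      Function.Periodic (Real.cos ∘ psi κ φ) (2 * K κ) := by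
  have hphi : ∀ u : ℝ, φ (u + 2 * K κ) = φ u + Real.pi := by
    intro u
    have h1 : G κ (φ u + Real.pi) = u + 2 * K κ := by
      rw [G_add_pi κ hκ₀ hκ₁, hφ₂ u]
    calc φ (u + 2 * K κ) = φ (G κ (φ u + Real.pi)) := by rw [h1]
      _ = φ u + Real.pi := hφ₁ _
  have hcos : ∀ u : ℝ, Real.cos (φ (u + 2 * K κ)) = - Real.cos (φ u) := by
    intro u
    rw [hphi u, Real.cos_add_pi]
  have hpsi : ∀ u : ℝ, Real.cos (psi κ φ (u + 2 * K κ)) = Real.cos (psi κ φ u) := by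
    intro u
    unfold psi
    rw [hphi u, Real.sin_add_pi]
    rw [show κ * -Real.sin (φ u) = -(κ * Real.sin (φ u)) by ring,
      Real.arcsin_neg, Real.cos_neg]
  refine ⟨hcos, hpsi, ?_, ?_⟩
  · intro u
    have h1 : u + 4 * K κ = (u + 2 * K κ) + 2 * K κ := by ring
    simp only [Function.comp_apply, h1, hcos, neg_neg]
  · intro u
    simp only [Function.comp_apply, hpsi]
end
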